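/- Let ω ∈ {0,1}^ℕ be a computable path (as a map ℕ → {0,1}, in Mathlib's sense of computability) that has infinitely many zeroes and infinitely many ones. Then the only interval forecast I for which ω is Schnorr random for the stationary forecasting system Γ_I is I = [0,1]; in particular, the only interval forecast for which ω is computably random is [0,1]. -/

import Mathlib

open Filter

noncomputable section

/-- Situations: finite binary strings. -/
abbrev Situation : Type := List Bool

/-- Paths: infinite binary sequences. -/
abbrev BitPath : Type := ℕ → Bool

/-- The first `n` outcomes of a path. -/
def pref (ω : BitPath) (n : ℕ) : Situation := (List.range n).map ω

/-- The real value of a bit. -/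
def bval (b : Bool) : ℝ := if b then 1 else 0

/-- Precise expectation of a gamble on `{0,1}` with respect to a forecast `p`. -/
def Ep (p : ℝ) (f : Bool → ℝ) : ℝ := p * f true + (1 - p) * f false

/-- Interval forecast: a nonempty closed subinterval of `[0,1]`. -/
def IsForecast (I : Set ℝ) : Prop :=
  ∃ l u : ℝ, 0 ≤ l ∧ l ≤ u ∧ u ≤ 1 ∧ I = Set.Icc l u

/-- Upper expectation associated with an interval forecast. -/
def upperExp (I : Set ℝ) (f : Bool → ℝ) : ℝ := sSup ((fun p => Ep p f) '' I)

/-- Lower expectation associated with an interval forecast. -/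
def lowerExp (I : Set ℝ) (f : Bool → ℝ) : ℝ := sInf ((fun p => Ep p f) '' I)

/-- Forecasting systems. -/
abbrev ForecastingSystem : Type := Situation → Set ℝ

def IsForecastingSystem (Γ : ForecastingSystem) : Prop := ∀ s, IsForecast (Γ s)

/-- Supermartingale for a forecasting system. -/
def Supermartingale (Γ : ForecastingSystem) (M : Situation → ℝ) : Prop :=
  ∀ s : Situation, upperExp (Γ s) (fun x => M (s ++ [x]) - M s) ≤ 0

/-- Submartingale for a forecasting system. -/
def Submartingale (Γ : ForecastingSystem) (M : Situation → ℝ) : Prop :=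
  ∀ s : Situation, 0 ≤ lowerExp (Γ s) (fun x => M (s ++ [x]) - M s)

/-- Test process: nonnegative with unit initial value. -/
def TestProcess (M : Situation → ℝ) : Prop := (∀ s, 0 ≤ M s) ∧ M [] = 1

/-- Test supermartingale. -/
def TestSupermartingale (Γ : ForecastingSystem) (M : Situation → ℝ) : Prop :=
  TestProcess M ∧ Supermartingale Γ M

/-- Computable real process. -/
def ComputableProcess (F : Situation → ℝ) : Prop :=
  ∃ r : Situation × ℕ → ℚ, ∃ e : Situation × ℕ → ℕ,
    Computable r ∧ Computable e ∧
    ∀ s n N, e (s, N) ≤ n → |(r (s, n) : ℝ) - F s| ≤ (2 : ℝ) ^ (-(N : ℤ))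

/-- Lower semicomputable real process. -/
def LowerSemicomputableProcess (F : Situation → ℝ) : Prop :=
  ∃ r : Situation × ℕ → ℚ, Computable r ∧
    (∀ s n, r (s, n) ≤ r (s, n + 1)) ∧
    ∀ s, Filter.Tendsto (fun n => (r (s, n) : ℝ)) Filter.atTop (nhds (F s))

def UpperSemicomputableProcess (F : Situation → ℝ) : Prop :=
  LowerSemicomputableProcess (fun s => -F s)

def ComputableReal (x : ℝ) : Prop := ComputableProcess (fun _ => x)
def LowerSemicomputableReal (x : ℝ) : Prop := LowerSemicomputableProcess (fun _ => x)
def UpperSemicomputableReal (x : ℝ) : Prop := UpperSemicomputableProcess (fun _ => x)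

/-- Computable real sequence. -/
def ComputableSeq (τ : ℕ → ℝ) : Prop :=
  ∃ r : ℕ × ℕ → ℚ, ∃ e : ℕ × ℕ → ℕ,
    Computable r ∧ Computable e ∧
    ∀ k n N, e (k, N) ≤ n → |(r (k, n) : ℝ) - τ k| ≤ (2 : ℝ) ^ (-(N : ℤ))

/-- Computable forecasting system. -/
def ComputableForecastingSystem (Γ : ForecastingSystem) : Prop :=
  ComputableProcess (fun s => sInf (Γ s)) ∧ ComputableProcess (fun s => sSup (Γ s))

/-- Growth function: computable, nondecreasing and unbounded. -/
def GrowthFunction (ρ : ℕ → ℕ) : Prop :=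
  Computable ρ ∧ Monotone ρ ∧ ∀ m : ℕ, ∃ n, m < ρ n

/-- Real growth function: computable, nondecreasing, nonnegative and unbounded. -/
def RealGrowthFunction (τ : ℕ → ℝ) : Prop :=
  ComputableSeq τ ∧ Monotone τ ∧ (∀ n, 0 ≤ τ n) ∧ ∀ B : ℝ, ∃ n, B < τ n

/-- Computably unbounded real-valued map. -/
def ComputablyUnbounded (μ : ℕ → ℝ) : Prop :=
  ∃ ρ : ℕ → ℕ, GrowthFunction ρ ∧
    (0 : EReal) < Filter.limsup (fun n => ((μ n - (ρ n : ℝ) : ℝ) : EReal)) Filter.atTop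

def ComputablyUnboundedOn (T : Situation → ℝ) (ω : BitPath) : Prop :=
  ComputablyUnbounded (fun n => T (pref ω n))

def BoundedAboveOn (T : Situation → ℝ) (ω : BitPath) : Prop :=
  ∃ B : ℝ, ∀ n, T (pref ω n) ≤ B

/-- Schnorr randomness of a path for a forecasting system. -/
def SchnorrRandom (ω : BitPath) (Γ : ForecastingSystem) : Prop :=
  ∀ T : Situation → ℝ, ComputableProcess T → TestSupermartingale Γ T →
    ¬ ComputablyUnboundedOn T ω

/-- Computable randomness of a path for a forecasting system. -/
def ComputablyRandom (ω : BitPath) (Γ : ForecastingSystem) : Prop :=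
  ∀ T : Situation → ℝ, ComputableProcess T → TestSupermartingale Γ T →
    BoundedAboveOn T ω

/-- Global upper expectation. -/
def upperExpGlobal (Γ : ForecastingSystem) (g : BitPath → ℝ) : ℝ :=
  sInf {x : ℝ | ∃ M : Situation → ℝ, Supermartingale Γ M ∧ x = M [] ∧
    ∀ ω : BitPath, (g ω : EReal) ≤
      Filter.liminf (fun n => ((M (pref ω n) : ℝ) : EReal)) Filter.atTop}

/-- Global lower expectation. -/
def lowerExpGlobal (Γ : ForecastingSystem) (g : BitPath → ℝ) : ℝ :=
  sSup {x : ℝ | ∃ M : Situation → ℝ, Submartingale Γ M ∧ x = M [] ∧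
    ∀ ω : BitPath,
      Filter.limsup (fun n => ((M (pref ω n) : ℝ) : EReal)) Filter.atTop ≤ (g ω : EReal)}

/-- Global upper probability. -/
def upperProb (Γ : ForecastingSystem) (A : Set BitPath) : ℝ :=
  upperExpGlobal Γ (Set.indicator A fun _ => 1)

/-- Number of selected situations along (the prefixes of) a situation. -/
def selSum (S : Situation → Bool) (s : Situation) : ℝ :=
  ∑ k ∈ Finset.range s.length, bval (S (s.take k))

/-- Selected average of process differences along a situation. -/
def selAvg (S : Situation → Bool) (M : Situation → ℝ) (s : Situation) : ℝ :=
  if 0 < selSum S s then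
    (∑ k ∈ Finset.range s.length,
      bval (S (s.take k)) * (M (s.take (k + 1)) - M (s.take k))) / selSum S s
  else 0

/-- Cylinder set of a situation. -/
def cyl (t : Situation) : Set BitPath := {ω | pref ω t.length = t}

/-- Lawful path. -/
def Lawful (ω : BitPath) : Prop :=
  ∃ R : Situation →. List Situation, Partrec R ∧
    ∀ m : ℕ, ∃ L : List Situation, L ∈ R (pref ω m) ∧
      L ≠ [] ∧
      (∀ t ∈ L, pref ω m <+: t ∧ pref ω m ≠ t) ∧
      ((⋃ t ∈ L, cyl t) ⊂ cyl (pref ω m)) ∧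
      ∃ t ∈ L, ω ∈ cyl t

namespace S16

/-! ### gcd via iteration, primrec -/

def gstep : ℕ × ℕ → ℕ × ℕ := fun p => if p.1 = 0 then p else (p.2 % p.1, p.1)

lemma gstep_iter : ∀ k (p : ℕ × ℕ), p.1 ≤ k → gstep^[k] p = (0, Nat.gcd p.1 p.2) := by
  intro k
  induction k with
  | zero => rintro ⟨a, b⟩ h; simp at h; subst h; simp [Nat.gcd]
  | succ k ih =>
    rintro ⟨a, b⟩ h
    rw [Function.iterate_succ_apply]
    by_cases ha : a = 0
    · subst ha
      have : gstep (0, b) = (0, b) := by simp [gstep]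
      rw [this, ih _ (by simp)]
    · have : gstep (a, b) = (b % a, a) := by simp [gstep, ha]
      rw [this, ih _ (by
        have := Nat.mod_lt b (Nat.pos_of_ne_zero ha); simp; omega)]
      conv_rhs => rw [Nat.gcd_rec]

def gcdF (x y : ℕ) : ℕ := (gstep^[x] (x, y)).2

lemma gcdF_eq (x y : ℕ) : gcdF x y = Nat.gcd x y := by
  rw [gcdF, gstep_iter x (x, y) le_rfl]

lemma gstep_primrec : Primrec gstep := by
  have h1 : PrimrecPred fun p : ℕ × ℕ => p.1 = 0 :=
    Primrec.eq.comp Primrec.fst (Primrec.const 0)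
  exact Primrec.ite h1 Primrec.id
    (Primrec.pair (Primrec.nat_mod.comp Primrec.snd Primrec.fst) Primrec.fst)

lemma gcdF_primrec : Primrec₂ gcdF := by
  have : Primrec fun p : ℕ × ℕ => (gstep^[p.1] p).2 :=
    Primrec.snd.comp (Primrec.nat_iterate Primrec.fst Primrec.id
      ((gstep_primrec.comp Primrec.snd).to₂))
  exact this.to₂

/-! ### countP primrec -/

lemma countP_primrec {p : ℕ → Bool} (hp : Primrec p) :
    Primrec fun l : List ℕ => l.countP p := by
  have h : Primrec fun l : List ℕ =>
      l.foldr (fun a acc => bif p a then acc + 1 else acc) 0 :=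
    Primrec.list_foldr Primrec.id (Primrec.const 0)
      ((Primrec.cond (hp.comp (Primrec.fst.comp Primrec.snd))
        (Primrec.succ.comp (Primrec.snd.comp Primrec.snd))
        (Primrec.snd.comp Primrec.snd)).to₂)
  refine h.of_eq fun l => ?_
  induction l with
  | nil => simp
  | cons a l ih =>
    simp only [List.foldr_cons, ih, List.countP_cons]
    cases hpa : p a <;> simp [hpa]

/-! ### rationals: encoding -/

def iabs (j : ℕ) : ℕ := (j + 1) / 2

lemma iabs_intEquivNat : ∀ z : ℤ, iabs (Equiv.intEquivNat z) = z.natAbs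
  | (n : ℕ) => by show (2*n+1)/2 = n; omega
  | (Int.negSucc n) => by show ((2*n+1)+1)/2 = n+1; omega

def e0 (q : ℚ) : ℕ := Nat.pair (Equiv.intEquivNat q.num) q.den

lemma e0_eq (q : ℚ) : @Encodable.encode ℚ Rat.instEncodable q = e0 q := rfl

def rangeB (j : ℕ) : Bool :=
  (!(j.unpair.2 == 0)) && (gcdF (iabs j.unpair.1) j.unpair.2 == 1)

lemma rangeB_iff (j : ℕ) :
    rangeB j = true ↔ j ∈ Set.range (@Encodable.encode ℚ Rat.instEncodable) := by
  simp only [rangeB, Bool.and_eq_true, Bool.not_eq_true', beq_eq_false_iff_ne, ne_eq,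
    beq_iff_eq, gcdF_eq]
  constructor
  · rintro ⟨hd, hg⟩
    refine ⟨⟨Equiv.intEquivNat.symm j.unpair.1, j.unpair.2, hd, ?_⟩, ?_⟩
    · show Int.natAbs _ |>.Coprime _
      have : (Equiv.intEquivNat.symm j.unpair.1 : ℤ).natAbs = iabs j.unpair.1 := by
        rw [← iabs_intEquivNat (Equiv.intEquivNat.symm j.unpair.1), Equiv.apply_symm_apply]
      rw [this]; exact hg
    · rw [e0_eq]
      show Nat.pair (Equiv.intEquivNat (Equiv.intEquivNat.symm j.unpair.1)) j.unpair.2 = j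
      rw [Equiv.apply_symm_apply, Nat.pair_unpair]
  · rintro ⟨q, rfl⟩
    rw [e0_eq]
    constructor
    · simp [e0, Nat.unpair_pair, q.den_nz]
    · simp only [e0, Nat.unpair_pair, iabs_intEquivNat]
      exact q.reduced

lemma rangeB_primrec : Primrec rangeB := by
  have hu1 : Primrec fun j : ℕ => j.unpair.1 := Primrec.fst.comp Primrec.unpair
  have hu2 : Primrec fun j : ℕ => j.unpair.2 := Primrec.snd.comp Primrec.unpair
  have hiabs : Primrec iabs :=
    Primrec.nat_div.comp (Primrec.succ) (Primrec.const 2)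
  have h1 : Primrec fun j : ℕ => !(j.unpair.2 == 0) :=
    (Primrec.dom_bool _).comp ((Primrec.beq (α := ℕ)).comp hu2 (Primrec.const 0))
  have h2 : Primrec fun j : ℕ => (gcdF (iabs j.unpair.1) j.unpair.2 == 1) :=
    (Primrec.beq (α := ℕ)).comp (gcdF_primrec.comp (hiabs.comp hu1) hu2) (Primrec.const 1)
  exact (Primrec.dom_bool₂ _).comp h1 h2

def qenc (q : ℚ) : ℕ := (List.range (e0 q)).countP rangeB

lemma qenc_eq (q : ℚ) : @Encodable.encode ℚ Primcodable.toEncodable q = qenc q := by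
  have h0 : @Encodable.encode ℚ Primcodable.toEncodable q =
      (List.range (@Encodable.encode ℚ Rat.instEncodable q)).countP
        (fun j => @decide (j ∈ Set.range (@Encodable.encode ℚ Rat.instEncodable))
          (Encodable.decidableRangeEncode ℚ j)) := rfl
  rw [h0, e0_eq, qenc]
  congr 1
  funext j
  rcases hb : rangeB j with _ | _
  · have : ¬ j ∈ Set.range (@Encodable.encode ℚ Rat.instEncodable) := by
      rw [← rangeB_iff]; simp [hb]
    simp [this]
  · have := (rangeB_iff j).1 hb
    simp [this]

lemma intEquivNat_natCast (n : ℕ) : Equiv.intEquivNat (n : ℤ) = 2 * n := rfl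

def QF (D m : ℕ) : ℕ :=
  (List.range (Nat.pair (2 * (m / Nat.gcd m D)) (D / Nat.gcd m D))).countP rangeB

lemma QF_primrec (D : ℕ) : Primrec (QF D) := by
  have hg : Primrec fun m : ℕ => Nat.gcd m D :=
    (gcdF_primrec.comp Primrec.id (Primrec.const D)).of_eq fun m => gcdF_eq m D
  have h1 : Primrec fun m : ℕ => 2 * (m / Nat.gcd m D) :=
    Primrec.nat_mul.comp (Primrec.const 2) (Primrec.nat_div.comp Primrec.id hg)
  have h2 : Primrec fun m : ℕ => D / Nat.gcd m D :=
    Primrec.nat_div.comp (Primrec.const D) hg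
  exact (countP_primrec rangeB_primrec).comp
    (Primrec.list_range.comp (Primrec₂.natPair.comp h1 h2))

/-- our canonical rational `m / D` -/
def qval (D : ℕ) (hD : D ≠ 0) (m : ℕ) : ℚ :=
  ⟨((m / Nat.gcd m D : ℕ) : ℤ), D / Nat.gcd m D,
    by
      have hgd : Nat.gcd m D ∣ D := Nat.gcd_dvd_right m D
      have hgpos : 0 < Nat.gcd m D := Nat.gcd_pos_of_pos_right m (Nat.pos_of_ne_zero hD)
      exact Nat.ne_of_gt (Nat.div_pos (Nat.le_of_dvd (Nat.pos_of_ne_zero hD) hgd) hgpos),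
    by
      have hgpos : 0 < Nat.gcd m D := Nat.gcd_pos_of_pos_right m (Nat.pos_of_ne_zero hD)
      simpa only [Int.natAbs_natCast] using Nat.coprime_div_gcd_div_gcd hgpos⟩

lemma qenc_qval (D : ℕ) (hD : D ≠ 0) (m : ℕ) :
    qenc (qval D hD m) = QF D m := by
  simp only [qenc, QF, e0, qval, intEquivNat_natCast]

lemma qval_cast (D : ℕ) (hD : D ≠ 0) (m : ℕ) :
    ((qval D hD m : ℚ) : ℝ) = (m : ℝ) / (D : ℝ) := by
  have hgpos : 0 < Nat.gcd m D := Nat.gcd_pos_of_pos_right m (Nat.pos_of_ne_zero hD)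
  have hg0 : ((Nat.gcd m D : ℕ) : ℝ) ≠ 0 := Nat.cast_ne_zero.2 (Nat.pos_iff_ne_zero.mp hgpos)
  have hD0 : ((D : ℕ) : ℝ) ≠ 0 := Nat.cast_ne_zero.2 hD
  rw [Rat.cast_def]
  show (((m / Nat.gcd m D : ℕ) : ℤ) : ℝ) / ((D / Nat.gcd m D : ℕ) : ℝ) = _
  rw [Int.cast_natCast, Nat.cast_div (Nat.gcd_dvd_left m D) hg0,
    Nat.cast_div (Nat.gcd_dvd_right m D) hg0, div_div_div_cancel_right₀ _ _ _]
  exact hg0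

/-- conclude computability into ℚ -/
lemma computable_rat {α : Type*} [Primcodable α] {f : α → ℚ} {F : α → ℕ}
    (hF : Computable F) (hqF : ∀ a, qenc (f a) = F a) : Computable f := by
  have h : Computable fun a => Denumerable.ofNat ℚ (F a) :=
    (Primrec.ofNat ℚ).to_comp.comp hF
  refine h.of_eq fun a => ?_
  rw [← hqF a, ← qenc_eq, Denumerable.ofNat_encode]


/-! ### prefix lemmas -/

lemma pref_length (ω : BitPath) (n : ℕ) : (pref ω n).length = n := by simp [pref]

lemma pref_succ (ω : BitPath) (n : ℕ) : pref ω (n+1) = pref ω n ++ [ω n] := by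
  simp [pref, List.range_succ]

lemma pref_getD (ω : BitPath) {k n : ℕ} (h : k < n) : (pref ω n).getD k false = ω k := by
  rw [List.getD_eq_getElem?_getD]
  simp [pref, List.getElem?_map, List.getElem?_range h]

/-! ### the betting process -/

def capA (ω : BitPath) (b : Bool) (W G D : ℕ) (s : Situation) : ℕ → ℕ
  | 0 => D
  | k + 1 =>
    (fun m => bif (ω k == b) && (G ≤ m) then (bif s.getD k false == b then m + W else m - G)
      else m) (capA ω b W G D s k)

def capF (ω : BitPath) (b : Bool) (W G D : ℕ) (s : Situation) : ℕ :=
  capA ω b W G D s s.length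

noncomputable def TT (ω : BitPath) (b : Bool) (W G D : ℕ) (s : Situation) : ℝ :=
  (capF ω b W G D s : ℝ) / D

lemma capA_append (ω : BitPath) (b : Bool) (W G D : ℕ) (s : Situation) (x : Bool) :
    ∀ k, k ≤ s.length → capA ω b W G D (s ++ [x]) k = capA ω b W G D s k := by
  intro k
  induction k with
  | zero => intro _; rfl
  | succ k ih =>
    intro hk
    have hks : k < s.length := hk
    simp only [capA, ih (le_of_lt hks)]
    rw [List.getD_append _ _ _ _ hks]

lemma capF_append (ω : BitPath) (b : Bool) (W G D : ℕ) (s : Situation) (x : Bool) :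
    capF ω b W G D (s ++ [x]) =
      (fun m => bif (ω s.length == b) && (G ≤ m) then (bif x == b then m + W else m - G)
        else m) (capF ω b W G D s) := by
  show capA ω b W G D (s ++ [x]) (s ++ [x]).length = _
  rw [List.length_append, List.length_singleton]
  show capA ω b W G D (s ++ [x]) (s.length + 1) = _
  simp only [capA, capA_append ω b W G D s x s.length le_rfl]
  congr 2
  rw [List.getD_eq_getElem?_getD, List.getElem?_concat_length]
  rfl

lemma capF_computable {ω : BitPath} (hω : Computable ω) (b : Bool) (W G D : ℕ) :
    Computable (capF ω b W G D) := by
  have hbody : Computable₂ (fun (s : Situation) (p : ℕ × ℕ) =>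
      bif (ω p.1 == b) && (G ≤ p.2) then
        (bif s.getD p.1 false == b then p.2 + W else p.2 - G) else p.2) := by
    have hk : Computable fun x : Situation × (ℕ × ℕ) => x.2.1 :=
      Computable.fst.comp Computable.snd
    have hm : Computable fun x : Situation × (ℕ × ℕ) => x.2.2 :=
      Computable.snd.comp Computable.snd
    have hc1 : Computable fun x : Situation × (ℕ × ℕ) => (ω x.2.1 == b) :=
      (Primrec.dom_bool (· == b)).to_comp.comp (hω.comp hk)
    have hc2 : Computable fun x : Situation × (ℕ × ℕ) => (decide (G ≤ x.2.2)) :=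
      (Primrec.nat_le.comp (Primrec.const G) Primrec.id).decide.to_comp.comp hm
    have hcand : Computable fun x : Situation × (ℕ × ℕ) =>
        ((ω x.2.1 == b) && (decide (G ≤ x.2.2))) :=
      (Primrec.dom_bool₂ (· && ·)).to_comp.comp₂ hc1.to₂ hc2.to₂
    have hgetD : Computable fun x : Situation × (ℕ × ℕ) => (x.1.getD x.2.1 false == b) :=
      (Primrec.dom_bool (· == b)).to_comp.comp
        ((Primrec.list_getD false).to_comp.comp Computable.fst hk)
    have hadd : Computable fun x : Situation × (ℕ × ℕ) => x.2.2 + W :=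
      (Primrec.nat_add.comp Primrec.id (Primrec.const W)).to_comp.comp hm
    have hsub : Computable fun x : Situation × (ℕ × ℕ) => x.2.2 - G :=
      (Primrec.nat_sub.comp Primrec.id (Primrec.const G)).to_comp.comp hm
    exact (Computable.cond hcand (Computable.cond hgetD hadd hsub) hm).to₂
  have h := Computable.nat_rec (Primrec.list_length.to_comp) (Computable.const D) hbody
  refine h.of_eq fun s => ?_
  show Nat.rec D _ s.length = capA ω b W G D s s.length
  induction s.length with
  | zero => rfl
  | succ k ih => simp only [capA, ← ih]

lemma TT_computableProcess {ω : BitPath} (hω : Computable ω) (b : Bool) (W G D : ℕ)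
    (hD : D ≠ 0) : ComputableProcess (TT ω b W G D) := by
  refine ⟨fun p => qval D hD (capF ω b W G D p.1), fun _ => 0,
    ?_, Computable.const 0, ?_⟩
  · refine computable_rat (F := fun p => QF D (capF ω b W G D p.1)) ?_ ?_
    · exact (QF_primrec D).to_comp.comp ((capF_computable hω b W G D).comp Computable.fst)
    · intro p; rw [qenc_qval]
  · intro s n N _
    rw [qval_cast]
    show |(capF ω b W G D s : ℝ) / D - TT ω b W G D s| ≤ _
    rw [TT, sub_self, abs_zero]
    positivity

lemma TT_testProcess (ω : BitPath) (b : Bool) (W G D : ℕ) (hD : D ≠ 0) :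
    TestProcess (TT ω b W G D) := by
  constructor
  · intro s; rw [TT]; positivity
  · show (capA ω b W G D [] 0 : ℝ) / D = 1
    show (D : ℝ) / D = 1
    rw [div_self (Nat.cast_ne_zero.2 hD)]

lemma TT_supermartingale (ω : BitPath) (b : Bool) (W G D : ℕ) (hD : D ≠ 0)
    (l u : ℝ)
    (hkey : ∀ p : ℝ, p ∈ Set.Icc l u →
      (if b then p * W ≤ (1 - p) * G else (1 - p) * W ≤ p * G)) :
    Supermartingale (fun _ => Set.Icc l u) (TT ω b W G D) := by
  intro s
  refine Real.sSup_le ?_ le_rfl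
  rintro y ⟨p, hp, rfl⟩
  have hDpos : (0 : ℝ) < D := by exact_mod_cast Nat.pos_of_ne_zero hD
  rcases hcond : ((ω s.length == b) && (decide (G ≤ capF ω b W G D s))) with _ | _
  · have hx : ∀ x : Bool, TT ω b W G D (s ++ [x]) = TT ω b W G D s := by
      intro x; rw [TT, TT, capF_append]; beta_reduce; rw [hcond]; rfl
    simp only [Ep, hx, sub_self, mul_zero, add_zero]
    norm_num
  · rw [Bool.and_eq_true, beq_iff_eq, decide_eq_true_eq] at hcond
    obtain ⟨hb1, hb2⟩ := hcond
    have hdec : decide (G ≤ capF ω b W G D s) = true := decide_eq_true hb2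
    have hwin : TT ω b W G D (s ++ [b]) - TT ω b W G D s = (W : ℝ) / D := by
      rw [TT, TT, capF_append]; beta_reduce
      rw [hb1, hdec, beq_self_eq_true]
      show ((capF ω b W G D s + W : ℕ) : ℝ) / D - (capF ω b W G D s : ℝ) / D = _
      push_cast; ring
    have hlose : TT ω b W G D (s ++ [!b]) - TT ω b W G D s = -((G : ℝ) / D) := by
      rw [TT, TT, capF_append]; beta_reduce
      rw [hb1, hdec]
      have hbb : ((!b) == b) = false := by cases b <;> rfl
      rw [hbb, beq_self_eq_true]
      show ((capF ω b W G D s - G : ℕ) : ℝ) / D - (capF ω b W G D s : ℝ) / D = _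
      rw [Nat.cast_sub hb2]; ring
    have hk := hkey p hp
    simp only [Ep]
    cases b with
    | false =>
      rw [if_neg (by simp)] at hk
      have h1 : TT ω false W G D (s ++ [true]) - TT ω false W G D s = -((G : ℝ) / D) := by
        simpa using hlose
      rw [h1, hwin]
      have e : p * (-((G : ℝ) / D)) + (1 - p) * ((W : ℝ) / D)
          = ((1 - p) * W - p * G) / D := by ring
      rw [e]
      exact div_nonpos_of_nonpos_of_nonneg (by linarith) (le_of_lt hDpos)
    | true =>
      rw [if_pos rfl] at hk
      have h1 : TT ω true W G D (s ++ [false]) - TT ω true W G D s = -((G : ℝ) / D) := by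
        simpa using hlose
      rw [h1, hwin]
      have e : p * ((W : ℝ) / D) + (1 - p) * (-((G : ℝ) / D))
          = (p * W - (1 - p) * G) / D := by ring
      rw [e]
      exact div_nonpos_of_nonpos_of_nonneg (by linarith) (le_of_lt hDpos)

/-! ### behaviour along the path -/

def cnt (ω : BitPath) (b : Bool) : ℕ → ℕ
  | 0 => 0
  | n + 1 => cnt ω b n + (bif ω n == b then 1 else 0)

lemma cnt_mono (ω : BitPath) (b : Bool) : Monotone (cnt ω b) :=
  monotone_nat_of_le_succ fun n => by
    show cnt ω b n ≤ cnt ω b n + _; exact Nat.le_add_right _ _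

lemma cnt_unbounded {ω : BitPath} {b : Bool} (hb : ∀ m : ℕ, ∃ n, m ≤ n ∧ ω n = b) :
    ∀ m : ℕ, ∃ n, m ≤ cnt ω b n := by
  intro m
  induction m with
  | zero => exact ⟨0, Nat.zero_le _⟩
  | succ m ih =>
    obtain ⟨n, hn⟩ := ih
    obtain ⟨n', hn', hωn'⟩ := hb n
    refine ⟨n' + 1, ?_⟩
    have : cnt ω b (n' + 1) = cnt ω b n' + 1 := by
      show cnt ω b n' + _ = _
      rw [hωn', beq_self_eq_true]
      rfl
    rw [this]
    have := cnt_mono ω b hn'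
    omega

lemma cnt_computable {ω : BitPath} (hω : Computable ω) (b : Bool) :
    Computable (cnt ω b) := by
  have hbody : Computable₂ (fun (_ : ℕ) (p : ℕ × ℕ) =>
      p.2 + (bif ω p.1 == b then 1 else 0)) := by
    have hk : Computable fun x : ℕ × (ℕ × ℕ) => x.2.1 := Computable.fst.comp Computable.snd
    have hm : Computable fun x : ℕ × (ℕ × ℕ) => x.2.2 := Computable.snd.comp Computable.snd
    have hc : Computable fun x : ℕ × (ℕ × ℕ) => (ω x.2.1 == b) :=
      (Primrec.dom_bool (· == b)).to_comp.comp (hω.comp hk)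
    exact (Primrec.nat_add.to_comp.comp hm
      (Computable.cond hc (Computable.const 1) (Computable.const 0))).to₂
  have h := Computable.nat_rec Computable.id (Computable.const 0) hbody
  refine h.of_eq fun n => ?_
  induction n with
  | zero => rfl
  | succ k ih => show _ = cnt ω b k + _; rw [← ih]; rfl

lemma capA_pref (ω : BitPath) (b : Bool) (W G D : ℕ) (hG : G ≤ D) (n : ℕ) :
    ∀ k, k ≤ n → capA ω b W G D (pref ω n) k = D + W * cnt ω b k := by
  intro k
  induction k with
  | zero => intro _; show D = D + W * 0; ring
  | succ k ih =>
    intro hk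
    have hkn : k < n := hk
    show (fun m => bif (ω k == b) && (G ≤ m) then
      (bif (pref ω n).getD k false == b then m + W else m - G) else m)
        (capA ω b W G D (pref ω n) k) = _
    rw [ih (le_of_lt hkn)]
    beta_reduce
    rw [pref_getD ω hkn]
    have hGle : decide (G ≤ D + W * cnt ω b k) = true :=
      decide_eq_true (le_trans hG (Nat.le_add_right _ _))
    rw [hGle, Bool.and_true]
    have hcnt : cnt ω b (k + 1) = cnt ω b k + (bif ω k == b then 1 else 0) := rfl
    rw [hcnt]
    rcases hωk : (ω k == b) with _ | _
    · show D + W * cnt ω b k = D + W * (cnt ω b k + 0)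
      ring
    · show D + W * cnt ω b k + W = D + W * (cnt ω b k + 1)
      ring
  -- needs the true branch getD = ω k = b? no: on-path the outcome matches prediction
  -- handled above

lemma TT_pref (ω : BitPath) (b : Bool) (W G D : ℕ) (hG : G ≤ D) (n : ℕ) :
    TT ω b W G D (pref ω n) = ((D : ℝ) + W * cnt ω b n) / D := by
  rw [TT, capF, pref_length, capA_pref ω b W G D hG n n le_rfl]
  push_cast; ring_nf

lemma TT_unbounded {ω : BitPath} (hω : Computable ω) (b : Bool) (W G D : ℕ)
    (hW : 1 ≤ W) (hG : G ≤ D) (hD : D ≠ 0)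
    (hb : ∀ m : ℕ, ∃ n, m ≤ n ∧ ω n = b) :
    ComputablyUnboundedOn (TT ω b W G D) ω := by
  refine ⟨fun n => cnt ω b n / D, ⟨?_, ?_, ?_⟩, ?_⟩
  · exact (Primrec.nat_div.to_comp).comp (cnt_computable hω b) (Computable.const D)
  · exact fun m n hmn => Nat.div_le_div_right (cnt_mono ω b hmn)
  · intro m
    obtain ⟨n, hn⟩ := cnt_unbounded hb (D * (m + 1))
    refine ⟨n, ?_⟩
    have : m + 1 ≤ cnt ω b n / D := (Nat.le_div_iff_mul_le (Nat.pos_of_ne_zero hD)).2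
      (by rw [Nat.mul_comm]; omega)
    show m < cnt ω b n / D
    omega
  · have hkey : ∀ n : ℕ, (1 : EReal) ≤
        ((TT ω b W G D (pref ω n) - ((cnt ω b n / D : ℕ) : ℝ) : ℝ) : EReal) := by
      intro n
      have hDpos : (0 : ℝ) < D := by exact_mod_cast Nat.pos_of_ne_zero hD
      have hreal : (1 : ℝ) ≤ TT ω b W G D (pref ω n) - ((cnt ω b n / D : ℕ) : ℝ) := by
        rw [TT_pref ω b W G D hG n]
        have hWc : (cnt ω b n : ℝ) ≤ (W : ℝ) * cnt ω b n := by
          have h1 : (1 : ℝ) ≤ (W : ℝ) := by exact_mod_cast hW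
          nlinarith [show (0:ℝ) ≤ (cnt ω b n : ℝ) from Nat.cast_nonneg _]
        have h4 : (cnt ω b n : ℝ) / D ≤ ((W : ℝ) * cnt ω b n) / D :=
          (div_le_div_iff_of_pos_right hDpos).2 hWc
        have h5 : ((cnt ω b n / D : ℕ) : ℝ) ≤ (cnt ω b n : ℝ) / (D : ℝ) := Nat.cast_div_le
        rw [add_div, div_self (ne_of_gt hDpos)]
        linarith
      calc (1 : EReal) = ((1 : ℝ) : EReal) := by rw [EReal.coe_one]
        _ ≤ _ := EReal.coe_le_coe_iff.2 hreal
    have hb1 : (0 : EReal) < 1 := by norm_num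
    refine lt_of_lt_of_le hb1 ?_
    refine Filter.le_limsup_of_frequently_le (Filter.Frequently.of_forall hkey) ?_
    exact ⟨⊤, Filter.Eventually.of_forall fun _ => le_top⟩

/-! ### bounded implies not computably unbounded -/

lemma bounded_not_unbounded {T : Situation → ℝ} {ω : BitPath}
    (hB : BoundedAboveOn T ω) : ¬ ComputablyUnboundedOn T ω := by
  rintro ⟨ρ, ⟨hcomp, hmono, hunb⟩, hpos⟩
  obtain ⟨B, hBle⟩ := hB
  obtain ⟨n₀, hn₀⟩ := hunb (Nat.ceil (max B 0))
  have hev : ∀ n, n₀ ≤ n → ((T (pref ω n) - (ρ n : ℝ) : ℝ) : EReal) ≤ (0 : EReal) := by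
    intro n hn
    have h1 : ((Nat.ceil (max B 0) : ℕ) : ℝ) < ((ρ n : ℕ) : ℝ) := by
      exact_mod_cast lt_of_lt_of_le hn₀ (hmono hn)
    have h2 : B ≤ ((Nat.ceil (max B 0) : ℕ) : ℝ) := le_trans (le_max_left _ _) (Nat.le_ceil _)
    have h3 : T (pref ω n) - (ρ n : ℝ) ≤ 0 := by have := hBle n; linarith
    exact EReal.coe_nonpos.2 h3
  have hls : Filter.limsup (fun n => ((T (pref ω n) - (ρ n : ℝ) : ℝ) : EReal))
      Filter.atTop ≤ 0 :=
    Filter.limsup_le_of_le (by isBoundedDefault) (Filter.eventually_atTop.2 ⟨n₀, hev⟩)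
  exact absurd (lt_of_lt_of_le hpos hls) (lt_irrefl _)

/-! ### the vacuous forecast [0,1] -/

lemma icc01_step {T : Situation → ℝ}
    (hT : TestSupermartingale (fun _ => Set.Icc (0:ℝ) 1) T) (s : Situation) (x : Bool) :
    T (s ++ [x]) ≤ T s := by
  have h := hT.2 s
  set f : Bool → ℝ := fun y => T (s ++ [y]) - T s with hf
  have hbdd : BddAbove ((fun p => Ep p f) '' Set.Icc (0:ℝ) 1) := by
    refine ⟨|f true| + |f false|, ?_⟩
    rintro y ⟨p, hp, rfl⟩
    obtain ⟨hp0, hp1⟩ := hp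
    have h1 := le_abs_self (f true); have h2 := le_abs_self (f false)
    have h3 := abs_nonneg (f true); have h4 := abs_nonneg (f false)
    show Ep p f ≤ _
    rw [Ep]
    nlinarith
  have hmem : Ep (bval x) f ∈ (fun p => Ep p f) '' Set.Icc (0:ℝ) 1 := by
    refine ⟨bval x, ?_, rfl⟩
    cases x <;> simp [bval, Set.mem_Icc] <;> norm_num
  have hle := le_trans (le_csSup hbdd hmem) h
  have hEx : Ep (bval x) f = f x := by
    cases x
    · show Ep (0 : ℝ) f = f false
      rw [Ep]; ring
    · show Ep (1 : ℝ) f = f true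
      rw [Ep]; ring
  rw [hEx] at hle
  have : T (s ++ [x]) - T s ≤ 0 := hle
  linarith

lemma icc01_bounded {ω : BitPath} {T : Situation → ℝ}
    (hT : TestSupermartingale (fun _ => Set.Icc (0:ℝ) 1) T) :
    BoundedAboveOn T ω := by
  refine ⟨1, fun n => ?_⟩
  induction n with
  | zero => rw [show pref ω 0 = [] from rfl, hT.1.2]
  | succ k ih => rw [pref_succ]; exact le_trans (icc01_step hT _ _) ih

lemma cr_icc01 (ω : BitPath) : ComputablyRandom ω (fun _ => Set.Icc 0 1) :=
  fun _ _ hT => icc01_bounded hT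

lemma sr_icc01 (ω : BitPath) : SchnorrRandom ω (fun _ => Set.Icc 0 1) :=
  fun _ _ hT => bounded_not_unbounded (icc01_bounded hT)

lemma cr_imp_sr {ω : BitPath} {Γ : ForecastingSystem} (h : ComputablyRandom ω Γ) :
    SchnorrRandom ω Γ :=
  fun T hc hT => bounded_not_unbounded (h T hc hT)

/-! ### main negative lemma -/

lemma not_schnorr {ω : BitPath} (hω : Computable ω)
    (h0 : ∀ m : ℕ, ∃ n, m ≤ n ∧ ω n = false)
    (h1 : ∀ m : ℕ, ∃ n, m ≤ n ∧ ω n = true)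
    {l u : ℝ} (hl : 0 ≤ l) (hlu : l ≤ u) (hu : u ≤ 1)
    (hne : ¬(l = 0 ∧ u = 1)) :
    ¬ SchnorrRandom ω (fun _ => Set.Icc l u) := by
  have hcase : 0 < l ∨ u < 1 := by
    by_contra h; push_neg at h
    exact hne ⟨le_antisymm h.1 hl, le_antisymm hu h.2⟩
  obtain ⟨b, W, G, D, hW, hG, hD, hkey, hb⟩ :
      ∃ (b : Bool) (W G D : ℕ), 1 ≤ W ∧ G ≤ D ∧ D ≠ 0 ∧
        (∀ p : ℝ, p ∈ Set.Icc l u →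
          (if b then p * W ≤ (1 - p) * G else (1 - p) * W ≤ p * G)) ∧
        (∀ m : ℕ, ∃ n, m ≤ n ∧ ω n = b) := by
    rcases hcase with hcase | hcase
    · -- 0 < l : bet on false
      obtain ⟨q, hq0, hql⟩ := exists_rat_btwn hcase
      have hq0' : (0 : ℚ) < q := by exact_mod_cast hq0
      have hq1' : q < 1 := by
        have : (q : ℝ) < 1 := lt_of_lt_of_le hql (le_trans hlu hu)
        exact_mod_cast this
      have hnum : (0 : ℤ) < q.num := Rat.num_pos.2 hq0'
      have hnd : q.num < (q.den : ℤ) := Rat.lt_one_iff_num_lt_denom.2 hq1'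
      have haD : q.num.toNat < q.den := by omega
      have ha1 : 1 ≤ q.num.toNat := by omega
      have hacast : (q.num.toNat : ℝ) = (q : ℝ) * q.den := by
        have hd : ((q.den : ℕ) : ℝ) ≠ 0 := Nat.cast_ne_zero.2 q.den_nz
        rw [Rat.cast_def]
        field_simp
        exact_mod_cast Int.toNat_of_nonneg (le_of_lt hnum)
      refine ⟨false, q.num.toNat, q.den - q.num.toNat, q.den, ha1, Nat.sub_le _ _,
        q.den_nz, ?_, h0⟩
      intro p hp
      show (1 - p) * (q.num.toNat : ℝ) ≤ p * ((q.den - q.num.toNat : ℕ) : ℝ)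
      have hDpos : (0 : ℝ) < q.den := by
        exact_mod_cast Nat.pos_of_ne_zero q.den_nz
      have hcast : ((q.den - q.num.toNat : ℕ) : ℝ) = (q.den : ℝ) - q.num.toNat :=
        Nat.cast_sub (le_of_lt haD)
      have hqp : (q : ℝ) ≤ p := le_of_lt (lt_of_lt_of_le hql hp.1)
      rw [hcast, hacast]
      nlinarith [mul_nonneg (sub_nonneg.2 hqp) hDpos.le]
    · -- u < 1 : bet on true
      obtain ⟨q, huq, hq1⟩ := exists_rat_btwn hcase
      have hq0' : (0 : ℚ) < q := by
        have : (0 : ℝ) < q := lt_of_le_of_lt (le_trans hl hlu) huq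
        exact_mod_cast this
      have hq1' : q < 1 := by exact_mod_cast hq1
      have hnum : (0 : ℤ) < q.num := Rat.num_pos.2 hq0'
      have hnd : q.num < (q.den : ℤ) := Rat.lt_one_iff_num_lt_denom.2 hq1'
      have haD : q.num.toNat < q.den := by omega
      have ha1 : 1 ≤ q.num.toNat := by omega
      have hacast : (q.num.toNat : ℝ) = (q : ℝ) * q.den := by
        have hd : ((q.den : ℕ) : ℝ) ≠ 0 := Nat.cast_ne_zero.2 q.den_nz
        rw [Rat.cast_def]
        field_simp
        exact_mod_cast Int.toNat_of_nonneg (le_of_lt hnum)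
      refine ⟨true, q.den - q.num.toNat, q.num.toNat, q.den, by omega,
        le_of_lt haD, q.den_nz, ?_, h1⟩
      intro p hp
      show p * ((q.den - q.num.toNat : ℕ) : ℝ) ≤ (1 - p) * (q.num.toNat : ℝ)
      have hDpos : (0 : ℝ) < q.den := by
        exact_mod_cast Nat.pos_of_ne_zero q.den_nz
      have hcast : ((q.den - q.num.toNat : ℕ) : ℝ) = (q.den : ℝ) - q.num.toNat :=
        Nat.cast_sub (le_of_lt haD)
      have hpq : p ≤ (q : ℝ) := le_of_lt (lt_of_le_of_lt hp.2 huq)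
      rw [hcast, hacast]
      nlinarith [mul_nonneg (sub_nonneg.2 hpq) hDpos.le]
  intro hSR
  exact hSR (TT ω b W G D) (TT_computableProcess hω b W G D hD)
    ⟨TT_testProcess ω b W G D hD, TT_supermartingale ω b W G D hD l u hkey⟩
    (TT_unbounded hω b W G D hW hG hD hb)


end S16

theorem stmt_16 (ω : BitPath) (hω : Computable ω)
    (h0 : ∀ m : ℕ, ∃ n, m ≤ n ∧ ω n = false)
    (h1 : ∀ m : ℕ, ∃ n, m ≤ n ∧ ω n = true) :
    (∀ I : Set ℝ, IsForecast I →
      (SchnorrRandom ω (fun _ => I) ↔ I = Set.Icc 0 1)) ∧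
    (∀ I : Set ℝ, IsForecast I →
      (ComputablyRandom ω (fun _ => I) ↔ I = Set.Icc 0 1)) := by
  have main : ∀ I : Set ℝ, IsForecast I → SchnorrRandom ω (fun _ => I) → I = Set.Icc 0 1 := by
    rintro I ⟨l, u, hl, hlu, hu, rfl⟩ hSR
    by_contra hne
    refine S16.not_schnorr hω h0 h1 hl hlu hu ?_ hSR
    rintro ⟨rfl, rfl⟩; exact hne rfl
  constructor
  · intro I hI
    constructor
    · exact main I hI
    · rintro rfl; exact S16.sr_icc01 ω
  · intro I hI
    constructor
    · intro hCR; exact main I hI (S16.cr_imp_sr hCR)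
    · rintro rfl; exact S16.cr_icc01 ω
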